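/- For all sufficiently large positive integers n, the number of partitions of n whose largest part is greater than 4·√n·log n is less than p(n)/n. -/

import Mathlib

open Filter Real

/-- The Ferrers diagram of a partition: the cell `(j, i)` (column `j`, row `i`)
belongs iff `1 ≤ j`, `1 ≤ i`, and at least `i` parts are `≥ j`
(i.e. row `i` has length `≥ j`). -/
def ferrersDiagram {n : ℕ} (lam : Nat.Partition n) : Set (ℤ × ℤ) :=
  {c | 1 ≤ c.1 ∧ 1 ≤ c.2 ∧ c.2 ≤ ((lam.parts.filter (fun x => c.1 ≤ (x : ℤ))).card : ℤ)}

/-- The translate of the Ferrers diagram of `lam` with apex at `(a, b)`. -/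
def placedFerrers {n : ℕ} (lam : Nat.Partition n) (a b : ℤ) : Set (ℤ × ℤ) :=
  (fun c : ℤ × ℤ => (c.1 + a - 1, c.2 + b - 1)) '' ferrersDiagram lam

/-- The number `p(n)` of partitions of `n`. -/
def numPartitions (n : ℕ) : ℕ := Fintype.card (Nat.Partition n)

/-- The rectangle `R_n` of width `p(n)` and height `n`. -/
def rectR (n : ℕ) : Set (ℤ × ℤ) :=
  {c | 1 ≤ c.1 ∧ c.1 ≤ (numPartitions n : ℤ) ∧ 1 ≤ c.2 ∧ c.2 ≤ (n : ℤ)}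

namespace PLPR

/-- Sum of the partition numbers `p 0 + ⋯ + p (n-1)`. -/
def T (n : ℕ) : ℕ := ∑ m ∈ Finset.range n, numPartitions m

lemma one_le_numPartitions (m : ℕ) : 1 ≤ numPartitions m := by
  have : Nonempty (Nat.Partition m) := ⟨Nat.Partition.indiscrete m⟩
  exact Fintype.card_pos

lemma part_le_sum {n : ℕ} (l : Nat.Partition n) {x : ℕ} (hx : x ∈ l.parts) : x ≤ n := by
  have h := Multiset.cons_erase hx
  have h2 : (x ::ₘ l.parts.erase x).sum = n := by rw [h, l.parts_sum]
  rw [Multiset.sum_cons] at h2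
  omega

/-- Inserting a part `v` gives an equivalence between partitions of `n - v` and
partitions of `n` containing a part `v`. -/
def insEquiv (n v : ℕ) (h1 : 1 ≤ v) (h2 : v ≤ n) :
    Nat.Partition (n - v) ≃ {l : Nat.Partition n // v ∈ l.parts} where
  toFun μ := ⟨⟨v ::ₘ μ.parts,
      by
        intro i hi
        rcases Multiset.mem_cons.mp hi with h | h
        · omega
        · exact μ.parts_pos h,
      by rw [Multiset.sum_cons, μ.parts_sum]; omega⟩,
    Multiset.mem_cons_self _ _⟩
  invFun l := ⟨l.1.parts.erase v,
      fun hi => l.1.parts_pos (Multiset.mem_of_mem_erase hi),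
      by
        have h := Multiset.cons_erase l.2
        have h2 : (v ::ₘ l.1.parts.erase v).sum = n := by rw [h, l.1.parts_sum]
        rw [Multiset.sum_cons] at h2
        omega⟩
  left_inv μ := by
    apply Nat.Partition.ext
    simp [Multiset.erase_cons_head]
  right_inv l := by
    apply Subtype.ext
    apply Nat.Partition.ext
    simpa using Multiset.cons_erase l.2

lemma card_mem_part {n v : ℕ} (h1 : 1 ≤ v) (h2 : v ≤ n) :
    Fintype.card {l : Nat.Partition n // v ∈ l.parts} = numPartitions (n - v) :=
  (Fintype.card_congr (insEquiv n v h1 h2)).symm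

/-- A finset of distinct positive integers with `k` elements has sum at least `k²/2`. -/
lemma card_sq_le_two_sum (S : Finset ℕ) (h : 0 ∉ S) : S.card * S.card ≤ 2 * ∑ x ∈ S, x := by
  induction S using Finset.induction_on_max with
  | empty => simp
  | insert a S ha ih =>
    have haS : a ∉ S := fun hmem => lt_irrefl a (ha a hmem)
    have h0S : 0 ∉ S := fun hmem => h (Finset.mem_insert_of_mem hmem)
    have ha0 : 1 ≤ a := by
      rcases Nat.eq_zero_or_pos a with h' | h'
      · exact absurd (h' ▸ Finset.mem_insert_self a S) h
      · exact h'
    have hSsub : S ⊆ Finset.Icc 1 (a - 1) := by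
      intro x hx
      have hx1 : 1 ≤ x := by
        rcases Nat.eq_zero_or_pos x with h' | h'
        · exact absurd (h' ▸ hx) h0S
        · exact h'
      have := ha x hx
      simp only [Finset.mem_Icc]
      omega
    have hcard : S.card ≤ a - 1 := by
      have := Finset.card_le_card hSsub
      simpa [Nat.card_Icc] using this
    have ihS := ih h0S
    have hca : S.card + 1 ≤ a := by omega
    rw [Finset.card_insert_of_notMem haS, Finset.sum_insert haS]
    nlinarith [ihS, hca]

/-- Key double–counting bound: `p 0 + ⋯ + p (n-1) ≤ √(2n) · p n`. -/
lemma T_le (n : ℕ) (hn : 1 ≤ n) : T n ≤ Nat.sqrt (2 * n) * numPartitions n := by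
  classical
  have hreidx : T n = ∑ v ∈ Finset.Icc 1 n, numPartitions (n - v) := by
    rw [T]
    refine (Finset.sum_nbij' (i := fun v => n - v) (j := fun m => n - m) ?_ ?_ ?_ ?_ ?_).symm
    · intro v hv; simp only [Finset.mem_Icc] at hv; simp only [Finset.mem_range]; omega
    · intro m hm; simp only [Finset.mem_range] at hm; simp only [Finset.mem_Icc]; omega
    · intro v hv; simp only [Finset.mem_Icc] at hv; show n - (n - v) = v; omega
    · intro m hm; simp only [Finset.mem_range] at hm; show n - (n - m) = m; omega
    · intro v hv; rfl
  have hcard : ∀ v ∈ Finset.Icc 1 n, numPartitions (n - v)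
      = (Finset.univ.filter (fun l : Nat.Partition n => v ∈ l.parts)).card := by
    intro v hv
    simp only [Finset.mem_Icc] at hv
    rw [← card_mem_part hv.1 hv.2, Fintype.card_subtype]
  rw [hreidx, Finset.sum_congr rfl hcard]
  have hswap : ∑ v ∈ Finset.Icc 1 n,
      (Finset.univ.filter (fun l : Nat.Partition n => v ∈ l.parts)).card
      = ∑ l : Nat.Partition n, l.parts.toFinset.card := by
    simp only [Finset.card_filter]
    rw [Finset.sum_comm]
    refine Finset.sum_congr rfl ?_
    intro l _
    rw [← Finset.card_filter]
    congr 1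
    ext v
    simp only [Finset.mem_filter, Finset.mem_Icc, Multiset.mem_toFinset]
    constructor
    · rintro ⟨_, h⟩; exact h
    · intro h
      exact ⟨⟨l.parts_pos h, part_le_sum l h⟩, h⟩
  rw [hswap]
  have hbound : ∀ l : Nat.Partition n, l.parts.toFinset.card ≤ Nat.sqrt (2 * n) := by
    intro l
    have h0 : (0 : ℕ) ∉ l.parts.toFinset := by
      intro h
      exact absurd (l.parts_pos (Multiset.mem_toFinset.mp h)) (lt_irrefl 0)
    have hsum : ∑ x ∈ l.parts.toFinset, x ≤ n := by
      have hle : l.parts.dedup ≤ l.parts := Multiset.dedup_le _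
      obtain ⟨u, hu⟩ := Multiset.le_iff_exists_add.mp hle
      have hsum2 : l.parts.dedup.sum ≤ n := by
        have h' : (l.parts.dedup + u).sum = n := by rw [← hu, l.parts_sum]
        rw [Multiset.sum_add] at h'
        omega
      have hts : ∑ x ∈ l.parts.toFinset, x = (Multiset.map (fun x => x) l.parts.dedup).sum := rfl
      rw [Multiset.map_id'] at hts
      omega
    have hsq := card_sq_le_two_sum _ h0
    have h2 : l.parts.toFinset.card * l.parts.toFinset.card ≤ 2 * n := by omega
    exact Nat.le_sqrt.mpr h2
  calc ∑ l : Nat.Partition n, l.parts.toFinset.card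
      ≤ ∑ _l : Nat.Partition n, Nat.sqrt (2 * n) :=
        Finset.sum_le_sum (fun l _ => hbound l)
    _ = numPartitions n * Nat.sqrt (2 * n) := by
        rw [Finset.sum_const, smul_eq_mul, numPartitions, Finset.card_univ]
    _ = Nat.sqrt (2 * n) * numPartitions n := Nat.mul_comm _ _

lemma T_succ (n : ℕ) : T (n + 1) = T n + numPartitions n := Finset.sum_range_succ _ _

lemma T_step {n j : ℕ} (h1 : 1 ≤ j) (hj : j ≤ n) :
    (Nat.sqrt (2 * n) + 1) * T j ≤ Nat.sqrt (2 * n) * T (j + 1) := by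
  have hb := T_le j h1
  have hmono : Nat.sqrt (2 * j) ≤ Nat.sqrt (2 * n) := Nat.sqrt_le_sqrt (by omega)
  have hTp : T j ≤ Nat.sqrt (2 * n) * numPartitions j :=
    le_trans hb (Nat.mul_le_mul_right _ hmono)
  rw [T_succ]
  calc (Nat.sqrt (2 * n) + 1) * T j = Nat.sqrt (2 * n) * T j + T j := by ring
    _ ≤ Nat.sqrt (2 * n) * T j + Nat.sqrt (2 * n) * numPartitions j :=
        Nat.add_le_add_left hTp _
    _ = Nat.sqrt (2 * n) * (T j + numPartitions j) := by ring

lemma T_chain {n W : ℕ} (hW : 1 ≤ W) :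
    ∀ k, W + k ≤ n →
      (Nat.sqrt (2 * n) + 1) ^ k * T W ≤ (Nat.sqrt (2 * n)) ^ k * T (W + k) := by
  intro k
  induction k with
  | zero => intro _; simp
  | succ k ih =>
    intro hk
    have ih' := ih (by omega)
    have hs := T_step (n := n) (j := W + k) (by omega) (by omega)
    calc (Nat.sqrt (2 * n) + 1) ^ (k + 1) * T W
        = (Nat.sqrt (2 * n) + 1) * ((Nat.sqrt (2 * n) + 1) ^ k * T W) := by ring
      _ ≤ (Nat.sqrt (2 * n) + 1) * ((Nat.sqrt (2 * n)) ^ k * T (W + k)) :=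
          Nat.mul_le_mul_left _ ih'
      _ = (Nat.sqrt (2 * n)) ^ k * ((Nat.sqrt (2 * n) + 1) * T (W + k)) := by ring
      _ ≤ (Nat.sqrt (2 * n)) ^ k * (Nat.sqrt (2 * n) * T (W + k + 1)) :=
          Nat.mul_le_mul_left _ hs
      _ = (Nat.sqrt (2 * n)) ^ (k + 1) * T (W + (k + 1)) := by
          rw [pow_succ]; ring_nf

end PLPR

set_option maxHeartbeats 2000000 in
open PLPR in
/-- For all sufficiently large `n`, fewer than `p(n)/n` partitions of `n`
have largest part greater than `4·√n·log n`. -/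
theorem partitions_large_part_rare :
    ∀ᶠ n : ℕ in atTop,
      (Nat.card {lam : Nat.Partition n //
          ∃ x ∈ lam.parts, 4 * Real.sqrt n * Real.log n < (x : ℝ)} : ℝ) <
        (numPartitions n : ℝ) / n := by
  rw [eventually_atTop]
  refine ⟨1048576, fun n hn => ?_⟩
  classical
  have hn1 : 1 ≤ n := by omega
  have hn0R : (0 : ℝ) < n := by positivity
  set R : ℝ := Real.sqrt n with hRdef
  set L : ℝ := Real.log n with hLdef
  have hR0 : 0 < R := Real.sqrt_pos.mpr hn0R
  have hRsq : R * R = n := Real.mul_self_sqrt (le_of_lt hn0R)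
  have hR : (1024 : ℝ) ≤ R := by
    rw [hRdef]
    have h1 : (1048576 : ℝ) ≤ n := by exact_mod_cast hn
    have h2 : ((1024 : ℝ)) ^ 2 ≤ (n : ℝ) := by nlinarith
    exact (Real.le_sqrt (by norm_num) (by positivity)).mpr h2
  have hL : (13 : ℝ) ≤ L := by
    have h1 : Real.log 1048576 ≤ L := by
      rw [hLdef]
      apply Real.log_le_log (by norm_num)
      exact_mod_cast hn
    have h2 : (1048576 : ℝ) = 2 ^ 20 := by norm_num
    rw [h2, Real.log_pow] at h1
    have h3 := Real.log_two_gt_d9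
    push_cast at h1
    nlinarith
  -- the cutoff M
  set M : ℕ := ⌊4 * Real.sqrt n * Real.log n⌋₊ with hMdef
  have hbnn : 0 ≤ 4 * R * L := by
    have : 0 ≤ L := by linarith
    positivity
  have hM1 : (M : ℝ) ≤ 4 * R * L := Nat.floor_le hbnn
  have hM2 : 4 * R * L < (M : ℝ) + 1 := Nat.lt_floor_add_one _
  -- M < n
  set Q : ℝ := Real.sqrt R with hQdef
  have hQ0 : 0 < Q := Real.sqrt_pos.mpr hR0
  have hQsq : Q * Q = R := Real.mul_self_sqrt (le_of_lt hR0)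
  have hQ32 : (32 : ℝ) ≤ Q := by
    rw [hQdef]
    have h2 : ((32 : ℝ)) ^ 2 ≤ R := by nlinarith
    exact (Real.le_sqrt (by norm_num) (by positivity)).mpr h2
  have hlogQ : Real.log Q ≤ Q - 1 := Real.log_le_sub_one_of_pos hQ0
  have hLQ : L = 4 * Real.log Q := by
    have h1 : Real.log R = L / 2 := by
      rw [hRdef, hLdef, Real.log_sqrt (le_of_lt hn0R)]
    have h2 : Real.log Q = Real.log R / 2 := by
      rw [hQdef, Real.log_sqrt (le_of_lt hR0)]
    rw [h2, h1]; ring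
  have hL4Q : L ≤ 4 * Q := by
    rw [hLQ]; nlinarith
  have hMn : M < n := by
    have hMr : (M : ℝ) < (n : ℝ) := by
      have h1 : 4 * R * L ≤ 16 * R * Q := by nlinarith
      have h2 : 16 * R * Q < (n : ℝ) := by nlinarith
      linarith
    exact_mod_cast hMr
  -- the scale s = ⌊√(2n)⌋
  set s : ℕ := Nat.sqrt (2 * n) with hsdef
  have hs1 : 1 ≤ s := by
    have h1 : (0:ℕ) < 2 * n := by omega
    have := Nat.sqrt_pos.mpr h1
    omega
  set S : ℝ := (s : ℝ) with hSdef
  have hS1 : (1 : ℝ) ≤ S := by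
    rw [hSdef]; exact_mod_cast hs1
  have hS0 : (0 : ℝ) < S := by linarith
  have hSle : S ≤ Real.sqrt 2 * R := by
    have hss : (s * s : ℕ) ≤ 2 * n := Nat.sqrt_le _
    have hss' : S * S ≤ 2 * (n : ℝ) := by
      rw [hSdef]; exact_mod_cast hss
    have h2R : Real.sqrt 2 * R = Real.sqrt (2 * (n:ℝ)) := by
      rw [hRdef, ← Real.sqrt_mul (by norm_num) (n : ℝ)]
    rw [h2R]
    apply (Real.le_sqrt (le_of_lt hS0) (by positivity)).mpr
    nlinarith
  have hsqrt2 : Real.sqrt 2 ≤ 1.42 := by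
    have : ((1.42 : ℝ)) ^ 2 = 2.0164 := by norm_num
    nlinarith [Real.sq_sqrt (show (0:ℝ) ≤ 2 by norm_num),
      Real.sqrt_nonneg (2:ℝ)]
  have hSR : S + 1 ≤ 1.43 * R := by nlinarith
  -- the key numeric inequality, in ℝ
  have hlogS : Real.log S ≤ (Real.log 2 + L) / 2 := by
    have h1 : Real.log S ≤ Real.log (Real.sqrt 2 * R) :=
      Real.log_le_log hS0 hSle
    have h2 : Real.log (Real.sqrt 2 * R) = Real.log (Real.sqrt (2 * (n:ℝ))) := by
      rw [hRdef, ← Real.sqrt_mul (by norm_num) (n : ℝ)]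
    have h3 : Real.log (Real.sqrt (2 * (n:ℝ))) = Real.log (2 * (n:ℝ)) / 2 :=
      Real.log_sqrt (by positivity)
    have h4 : Real.log (2 * (n:ℝ)) = Real.log 2 + L := by
      rw [hLdef, Real.log_mul (by norm_num) (ne_of_gt hn0R)]
    calc Real.log S ≤ _ := h1
      _ = _ := h2
      _ = _ := h3
      _ = (Real.log 2 + L) / 2 := by rw [h4]
  have hlog2 : Real.log 2 ≤ 0.7 := by
    have := Real.log_two_lt_d9
    linarith
  have hkey1 : (L + Real.log S) * (S + 1) < (M : ℝ) := by
    have hlogS' : Real.log S ≤ 0.35 + L / 2 := by linarith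
    have hLS : 0 < L + Real.log S := by
      have : 0 ≤ Real.log S := Real.log_nonneg hS1
      linarith
    have h1 : (L + Real.log S) * (S + 1) ≤ (1.5 * L + 0.35) * (1.43 * R) := by
      apply mul_le_mul (by linarith) hSR (by linarith) (by nlinarith)
    have h2 : (1.5 * L + 0.35) * (1.43 * R) < 4 * R * L - 1 := by nlinarith
    linarith
  have hkey2 : 1 / (S + 1) ≤ Real.log (S + 1) - Real.log S := by
    have hx : (0:ℝ) < (S + 1) / S := by positivity
    have h1 : Real.log (S / (S + 1)) ≤ S / (S + 1) - 1 :=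
      Real.log_le_sub_one_of_pos (by positivity)
    have h2 : Real.log (S / (S + 1)) = Real.log S - Real.log (S + 1) :=
      Real.log_div (ne_of_gt hS0) (by linarith)
    have h3 : S / (S + 1) - 1 = -(1 / (S + 1)) := by
      field_simp
      ring
    rw [h2, h3] at h1
    linarith
  have hnum : (n : ℝ) * S ^ (M + 1) < (S + 1) ^ M := by
    have hM0 : (0:ℝ) ≤ (M:ℝ) := Nat.cast_nonneg _
    have hstep : L + Real.log S < (M : ℝ) * (Real.log (S + 1) - Real.log S) := by
      have hdiv : L + Real.log S < (M : ℝ) / (S + 1) := by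
        rw [lt_div_iff₀ (by linarith)]
        exact hkey1
      have h2 : (M : ℝ) / (S + 1) = (M : ℝ) * (1 / (S + 1)) := by ring
      have h3 : (M : ℝ) * (1 / (S + 1)) ≤ (M : ℝ) * (Real.log (S + 1) - Real.log S) :=
        mul_le_mul_of_nonneg_left hkey2 hM0
      linarith [h2 ▸ hdiv]
    have hloglt : Real.log ((n : ℝ) * S ^ (M + 1)) < Real.log ((S + 1) ^ M) := by
      rw [Real.log_mul (ne_of_gt hn0R) (by positivity), Real.log_pow, Real.log_pow]
      push_cast
      nlinarith [hstep]
    have hpos1 : (0:ℝ) < (n : ℝ) * S ^ (M + 1) := by positivity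
    have hpos2 : (0:ℝ) < (S + 1) ^ M := by positivity
    exact (Real.log_lt_log_iff hpos1 hpos2).mp hloglt
  have hnumN : n * s ^ (M + 1) < (s + 1) ^ M := by
    have := hnum
    rw [hSdef] at this
    exact_mod_cast this
  -- the counting bound
  set W : ℕ := n - M with hWdef
  have hW1 : 1 ≤ W := by omega
  have hWM : W + M = n := by omega
  set A := {lam : Nat.Partition n //
      ∃ x ∈ lam.parts, 4 * Real.sqrt n * Real.log n < (x : ℝ)} with hAdef
  have hcount : Nat.card A ≤ T W := by
    have hbig : ∀ (l : Nat.Partition n) (x : ℕ), x ∈ l.parts →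
        4 * Real.sqrt n * Real.log n < (x : ℝ) → M + 1 ≤ x ∧ x ≤ n := by
      intro l x hxp hxb
      constructor
      · by_contra hcon
        push_neg at hcon
        have hxM : x ≤ M := by omega
        have : (x : ℝ) ≤ (M : ℝ) := by exact_mod_cast hxM
        have : (x : ℝ) ≤ 4 * R * L := le_trans this hM1
        rw [hRdef, hLdef] at this
        linarith
      · exact part_le_sum l hxp
    have hsubset : (Finset.univ.filter (fun lam : Nat.Partition n =>
          ∃ x ∈ lam.parts, 4 * Real.sqrt n * Real.log n < (x : ℝ)))
        ⊆ (Finset.Icc (M + 1) n).biUnion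
            (fun x => Finset.univ.filter (fun l : Nat.Partition n => x ∈ l.parts)) := by
      intro l hl
      rw [Finset.mem_filter] at hl
      obtain ⟨-, x, hxp, hxb⟩ := hl
      obtain ⟨hx1, hx2⟩ := hbig l x hxp hxb
      apply Finset.mem_biUnion.mpr
      exact ⟨x, Finset.mem_Icc.mpr ⟨hx1, hx2⟩, Finset.mem_filter.mpr ⟨Finset.mem_univ _, hxp⟩⟩
    have hA : Nat.card A = (Finset.univ.filter (fun lam : Nat.Partition n =>
        ∃ x ∈ lam.parts, 4 * Real.sqrt n * Real.log n < (x : ℝ))).card := by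
      rw [hAdef, Nat.card_eq_fintype_card, Fintype.card_subtype]
    rw [hA]
    calc (Finset.univ.filter _).card
        ≤ ((Finset.Icc (M + 1) n).biUnion
            (fun x => Finset.univ.filter (fun l : Nat.Partition n => x ∈ l.parts))).card :=
          Finset.card_le_card hsubset
      _ ≤ ∑ x ∈ Finset.Icc (M + 1) n,
            (Finset.univ.filter (fun l : Nat.Partition n => x ∈ l.parts)).card :=
          Finset.card_biUnion_le
      _ = ∑ x ∈ Finset.Icc (M + 1) n, numPartitions (n - x) := by
          refine Finset.sum_congr rfl ?_
          intro x hx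
          rw [Finset.mem_Icc] at hx
          rw [← Fintype.card_subtype, card_mem_part (by omega) hx.2]
      _ = T W := by
          rw [T]
          refine Finset.sum_nbij' (i := fun x => n - x) (j := fun m => n - m) ?_ ?_ ?_ ?_ ?_
          · intro x hx; simp only [Finset.mem_Icc] at hx; simp only [Finset.mem_range]; omega
          · intro m hm; simp only [Finset.mem_range] at hm; simp only [Finset.mem_Icc]; omega
          · intro x hx; simp only [Finset.mem_Icc] at hx; show n - (n - x) = x; omega
          · intro m hm; simp only [Finset.mem_range] at hm; show n - (n - m) = m; omega
          · intro x hx; rfl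
  -- the chain bound
  have hchain : (s + 1) ^ M * T W ≤ s ^ M * T n := by
    have := T_chain (n := n) (W := W) hW1 M (by omega)
    rwa [hWM] at this
  have hTn : T n ≤ s * numPartitions n := T_le n hn1
  have hTW1 : 1 ≤ T W := by
    have h0 : numPartitions 0 ≤ T W := by
      apply Finset.single_le_sum (f := fun m => numPartitions m)
      · intro i _; exact Nat.zero_le _
      · exact Finset.mem_range.mpr (by omega)
    have := one_le_numPartitions 0
    omega
  -- conclude in ℕ
  have hfinal : n * Nat.card A < numPartitions n := by
    have h1 : s ^ (M + 1) * (n * Nat.card A) ≤ (n * s ^ (M + 1)) * T W := by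
      calc s ^ (M + 1) * (n * Nat.card A) = (n * s ^ (M + 1)) * Nat.card A := by ring
        _ ≤ (n * s ^ (M + 1)) * T W := Nat.mul_le_mul_left _ hcount
    have h2 : (n * s ^ (M + 1)) * T W < (s + 1) ^ M * T W := by
      exact mul_lt_mul_of_pos_right hnumN (show 0 < T W by omega)
    have h3 : (s + 1) ^ M * T W ≤ s ^ M * (s * numPartitions n) :=
      le_trans hchain (Nat.mul_le_mul_left _ hTn)
    have h4 : s ^ M * (s * numPartitions n) = s ^ (M + 1) * numPartitions n := by
      rw [pow_succ]; ring
    have h5 : s ^ (M + 1) * (n * Nat.card A) < s ^ (M + 1) * numPartitions n := by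
      omega
    exact Nat.lt_of_mul_lt_mul_left h5
  -- conclude in ℝ
  rw [lt_div_iff₀ hn0R]
  have : ((n * Nat.card A : ℕ) : ℝ) < ((numPartitions n : ℕ) : ℝ) := by
    exact_mod_cast hfinal
  push_cast at this ⊢
  linarith
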